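/- arXiv:1504.02694 — 10 statements merged into one kernel-verified Lean document; each statement's English description precedes it below -/
import Mathlib

section
/- Let X be a type, L : Set (FreeMonoid X), and let e_L : FreeMonoid X →* Syn L denote the quotient homomorphism of FreeMonoid X by the syntactic congruence of L. Then (i) membership in L factors through e_L, i.e. there is f_L : Syn L → Prop with (w ∈ L ↔ f_L (e_L w)) for all w; and (ii) for every monoid M, every surjective monoid homomorphism e : FreeMonoid X →* M, and every f : M → Prop satisfying (w ∈ L ↔ f (e w)) for all w, there exists a unique monoid homomorphism h : M →* Syn L with h ∘ e = e_L; moreover f_L ∘ h = f. -/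
/-- The syntactic congruence of a language `L` over `X`. -/
def syntacticCon (X : Type*) (L : Set (FreeMonoid X)) : Con (FreeMonoid X) where
  r u v := ∀ x y : FreeMonoid X, x * u * y ∈ L ↔ x * v * y ∈ L
  iseqv :=
    ⟨fun _ _ _ => Iff.rfl, fun h x y => (h x y).symm, fun h1 h2 x y => (h1 x y).trans (h2 x y)⟩
  mul' := by
    intro a b c d hab hcd x y
    calc x * (a * c) * y ∈ L
        ↔ (x * a) * c * y ∈ L := by rw [show x * (a * c) * y = (x * a) * c * y by
          simp [mul_assoc]]
      _ ↔ (x * a) * d * y ∈ L := hcd (x * a) y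
      _ ↔ x * a * (d * y) ∈ L := by rw [mul_assoc]
      _ ↔ x * b * (d * y) ∈ L := hab x (d * y)
      _ ↔ x * (b * d) * y ∈ L := by rw [show x * (b * d) * y = x * b * (d * y) by
          simp [mul_assoc]]

/-- universal property of the syntactic monoid
`Syn L = (syntacticCon X L).Quotient` with quotient homomorphism
`e_L = (syntacticCon X L).mk'`: membership in `L` factors through `e_L` via some
`f_L : Syn L → Prop`, and for every monoid `M`, every surjective monoid homomorphism
`e : FreeMonoid X →* M` and every `f : M → Prop` recognizing `L` (i.e. `w ∈ L ↔ f (e w)`),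
there is a unique monoid homomorphism `h : M →* Syn L` with `h ∘ e = e_L`;
moreover `f_L ∘ h = f`. -/
theorem syntacticMonoid_universal {X : Type*} (L : Set (FreeMonoid X)) :
    ∃ fL : (syntacticCon X L).Quotient → Prop,
      (∀ w : FreeMonoid X, w ∈ L ↔ fL ((syntacticCon X L).mk' w)) ∧
      ∀ (M : Type*) [Monoid M] (e : FreeMonoid X →* M), Function.Surjective e →
        ∀ f : M → Prop, (∀ w : FreeMonoid X, w ∈ L ↔ f (e w)) →
          (∃! h : M →* (syntacticCon X L).Quotient,
              h.comp e = (syntacticCon X L).mk') ∧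
          ∀ h : M →* (syntacticCon X L).Quotient,
            h.comp e = (syntacticCon X L).mk' → fL ∘ ⇑h = f := by
  set c := syntacticCon X L with hc
  refine ⟨Quotient.lift (fun w => w ∈ L) (fun u v huv => propext ?_), fun w => Iff.rfl, ?_⟩
  · have := huv 1 1
    simpa using this
  · intro M _ e hsurj f hf
    -- key : ker e ≤ c
    have key : ∀ u v : FreeMonoid X, e u = e v → c.mk' u = c.mk' v := by
      intro u v huv
      refine (Con.eq c).mpr (fun x y => ?_)
      rw [hf, hf, map_mul, map_mul, map_mul, map_mul, huv]
    set s := Function.surjInv hsurj with hs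
    have hes : ∀ m, e (s m) = m := Function.surjInv_eq hsurj
    have hsw : ∀ w : FreeMonoid X, c.mk' (s (e w)) = c.mk' w := fun w => key _ _ (hes _)
    refine ⟨⟨⟨⟨fun m => c.mk' (s m), ?_⟩, ?_⟩, ?_, ?_⟩, ?_⟩
    · have : e (s 1) = e 1 := by simp [hes]
      simpa using key _ _ this
    · intro a b
      have : e (s (a * b)) = e (s a * s b) := by simp [hes]
      simpa using key _ _ this
    · exact MonoidHom.ext fun w => hsw w
    · intro h' hh'
      refine MonoidHom.ext fun m => ?_
      obtain ⟨w, rfl⟩ := hsurj m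
      have := DFunLike.congr_fun hh' w
      simp only [MonoidHom.comp_apply] at this
      rw [this]
      exact (hsw w).symm
    · intro h hh
      funext m
      obtain ⟨w, rfl⟩ := hsurj m
      have := DFunLike.congr_fun hh w
      simp only [MonoidHom.comp_apply] at this
      refine (congrArg (Quotient.lift _ _) this).trans ?_
      show (w ∈ L) = f (e w)
      exact propext (hf w)
end

section
/- Let X be a type and L : Set (FreeMonoid X). Let Q_L ⊆ Set (FreeMonoid X) be the set of left quotients of L, Q_L = { u⁻¹L | u : FreeMonoid X } where u⁻¹L = { w | u * w ∈ L }, and let φ : FreeMonoid X →* Function.End Q_L be the monoid homomorphism sending w to the map K ↦ w⁻¹K (each left quotient of L is sent to another left quotient, and φ reverses/respects composition appropriately so as to be a monoid homomorphism). Then the syntactic monoid of L (the quotient of FreeMonoid X by the syntactic congruence) is isomorphic as a monoid to the range of φ, i.e. to the transition monoid of the minimal automaton of L. -/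
/-- The set of left quotients (derivatives) of a language `L`, the state set of the
minimal automaton of `L`. -/
abbrev leftQuotients {X : Type*} (L : Set (FreeMonoid X)) : Type _ :=
  {K : Set (FreeMonoid X) // ∃ u : FreeMonoid X, K = {w | u * w ∈ L}}

def phiMap {X : Type*} (L : Set (FreeMonoid X)) (w : FreeMonoid X) :
    Function.End (leftQuotients L) := fun K =>
  ⟨{w' | w * w' ∈ K.val}, by
    obtain ⟨u, hu⟩ := K.2
    exact ⟨u * w, by ext x; simp [hu, mul_assoc]⟩⟩

def phi {X : Type*} (L : Set (FreeMonoid X)) :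
    FreeMonoid X →* (Function.End (leftQuotients L))ᵐᵒᵖ where
  toFun w := MulOpposite.op (phiMap L w)
  map_one' := rfl
  map_mul' u v := by
    show MulOpposite.op (phiMap L (u * v)) = MulOpposite.op (phiMap L v * phiMap L u)
    congr 1
    funext K
    apply Subtype.ext
    ext x
    show u * v * x ∈ K.val ↔ u * (v * x) ∈ K.val
    rw [mul_assoc]

theorem syntacticCon_eq_ker {X : Type*} (L : Set (FreeMonoid X)) :
    syntacticCon X L = Con.ker (phi L) := by
  ext u v
  constructor
  · intro h
    show MulOpposite.op (phiMap L u) = MulOpposite.op (phiMap L v)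
    congr 1
    funext K
    apply Subtype.ext
    obtain ⟨a, ha⟩ := K.2
    ext y
    show u * y ∈ K.val ↔ v * y ∈ K.val
    rw [ha]
    show a * (u * y) ∈ L ↔ a * (v * y) ∈ L
    rw [← mul_assoc, ← mul_assoc]
    exact h a y
  · intro h x y
    have h2 : phiMap L u = phiMap L v := MulOpposite.op_injective h
    have h3 : (phiMap L u ⟨{w | x * w ∈ L}, ⟨x, rfl⟩⟩).val
        = (phiMap L v ⟨{w | x * w ∈ L}, ⟨x, rfl⟩⟩).val := by rw [h2]
    have h4 : x * (u * y) ∈ L ↔ x * (v * y) ∈ L := Set.ext_iff.mp h3 y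
    simpa [mul_assoc] using h4

/-- the syntactic monoid of `L` (the quotient of `FreeMonoid X` by the
syntactic congruence) is isomorphic to the transition monoid of the minimal automaton
of `L`: the range of the monoid homomorphism `φ` sending a word `w` to the transition
map `K ↦ w⁻¹K` on the left quotients of `L` (valued in the opposite of `Function.End`,
which is the composition order making `φ` a monoid homomorphism). -/
theorem syntacticMonoid_iso_transitionMonoid {X : Type*} (L : Set (FreeMonoid X)) :
    ∃ φ : FreeMonoid X →* (Function.End (leftQuotients L))ᵐᵒᵖ,
      (∀ (w : FreeMonoid X) (K : leftQuotients L),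
        ((φ w).unop K).val = {w' : FreeMonoid X | w * w' ∈ K.val}) ∧
      Nonempty ((syntacticCon X L).Quotient ≃* MonoidHom.mrange φ) := by
  refine ⟨phi L, fun w K => rfl, ?_⟩
  rw [syntacticCon_eq_ker]
  exact ⟨Con.quotientKerEquivRange (phi L)⟩
end

section
/- Let X be a type and L : Language X (equivalently L : Set (FreeMonoid X)). Then L is a regular language (accepted by a deterministic finite automaton with finitely many states) if and only if the syntactic monoid of L, i.e. the quotient of FreeMonoid X by the syntactic congruence of L, is a finite type. -/
/-- a language `L` is regular (accepted by a DFA with finitely many states)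
iff its syntactic monoid (the quotient of `FreeMonoid X` by the syntactic congruence of
`L`) is finite. -/
theorem isRegular_iff_finite_syntacticMonoid {X : Type} (L : Language X) :
    L.IsRegular ↔
      Finite (syntacticCon X {w : FreeMonoid X | FreeMonoid.toList w ∈ L}).Quotient := by
  set L' : Set (FreeMonoid X) := {w : FreeMonoid X | FreeMonoid.toList w ∈ L} with hL'
  set C := syntacticCon X L' with hC
  constructor
  · rintro ⟨σ, hσ, M, rfl⟩
    -- map each word to its transition function
    set f : FreeMonoid X → (σ → σ) := fun w s => M.evalFrom s (FreeMonoid.toList w) with hf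
    have key : ∀ u v, f u = f v → C u v := by
      intro u v huv x y
      simp only [hL', hC, Set.mem_setOf_eq, DFA.mem_accepts, DFA.eval,
        FreeMonoid.toList_mul]
      rw [DFA.evalFrom_of_append, DFA.evalFrom_of_append,
        DFA.evalFrom_of_append, DFA.evalFrom_of_append,
        show M.evalFrom (M.evalFrom M.start (FreeMonoid.toList x)) (FreeMonoid.toList u)
          = f u (M.evalFrom M.start (FreeMonoid.toList x)) from rfl, huv]
    have : Finite (σ → σ) := inferInstance
    classical
    refine Finite.of_surjective (α := σ → σ)
      (fun g => if h : ∃ w, f w = g then (h.choose : C.Quotient) else ((1 : FreeMonoid X) : C.Quotient)) ?_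
    intro q
    induction q using Con.induction_on with
    | H w =>
      refine ⟨f w, ?_⟩
      have h : ∃ w', f w' = f w := ⟨w, rfl⟩
      show (if h : ∃ w', f w' = f w then ((h.choose : C.Quotient)) else ((1 : FreeMonoid X) : C.Quotient)) = (w : C.Quotient)
      rw [dif_pos h]
      exact (Con.eq C).mpr (key _ _ h.choose_spec)
  · intro hfin
    haveI : Fintype C.Quotient := Fintype.ofFinite _
    classical
    -- DFA on the syntactic monoid
    set M : DFA X C.Quotient :=
      { step := fun q a => q * ((FreeMonoid.of a : FreeMonoid X) : C.Quotient),
        start := (1 : C.Quotient),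
        accept := {q | Quot.liftOn q (fun w => w ∈ L') (fun a b h => propext (by
          simpa using h 1 1))} } with hM
    refine ⟨C.Quotient, inferInstance, M, ?_⟩
    have heval : ∀ l : List X,
        M.eval l = ((FreeMonoid.ofList l : FreeMonoid X) : C.Quotient) := by
      intro l
      induction l using List.reverseRec with
      | nil => rfl
      | append_singleton l a ih =>
        rw [DFA.eval_append_singleton, ih]
        show (_ : C.Quotient) * _ = _
        rw [← Con.coe_mul]
        congr 1
    ext w
    rw [DFA.mem_accepts, heval]
    show (FreeMonoid.ofList w : FreeMonoid X) ∈ L' ↔ w ∈ L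
    simp [hL', FreeMonoid.toList_ofList]
end

section
/- Let X be a type and L : Language X (equivalently L : Set (FreeMonoid X)). Then L is a regular language if and only if L is recognized by a finite monoid, i.e., there exist a finite monoid M, a monoid homomorphism e : FreeMonoid X →* M, and a subset F ⊆ M such that L = e⁻¹(F). -/
private lemma evalFrom_eq_mul {X M : Type} [Monoid M] (e : FreeMonoid X →* M)
    (l : List X) (m : M) :
    DFA.evalFrom ⟨fun m a => m * e (FreeMonoid.of a), 1, ∅⟩ m l
      = m * e (FreeMonoid.ofList l) := by
  induction l generalizing m with
  | nil => simp [DFA.evalFrom]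
  | cons a t ih =>
      have : FreeMonoid.ofList (a :: t) = FreeMonoid.of a * FreeMonoid.ofList t := rfl
      rw [this, map_mul]
      show DFA.evalFrom _ (m * e (FreeMonoid.of a)) t = _
      rw [ih, mul_assoc]

private lemma unop_lift_eq {X σ : Type} (dfa : DFA X σ) (w : FreeMonoid X) (s : σ) :
    (FreeMonoid.lift (fun a => (MulOpposite.op ((fun t => dfa.step t a) : Function.End σ) : (Function.End σ)ᵐᵒᵖ)) w).unop s
      = dfa.evalFrom s (FreeMonoid.toList w) := by
  induction w using FreeMonoid.recOn generalizing s with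
  | one => rfl
  | of_mul a w ih =>
      rw [map_mul, FreeMonoid.lift_eval_of, FreeMonoid.toList_of_mul, MulOpposite.unop_mul]
      exact ih (dfa.step s a)

/-- a language `L` is regular iff it is recognized by a finite monoid,
i.e. there are a monoid `M`, a monoid homomorphism `e : FreeMonoid X →* M` and a
subset `F ⊆ M` with `L = e⁻¹(F)`. -/
theorem isRegular_iff_recognized_by_finite_monoid {X : Type} (L : Language X) :
    L.IsRegular ↔
      ∃ (M : Type) (_ : Monoid M) (_ : Finite M) (e : FreeMonoid X →* M) (F : Set M),
        {w : FreeMonoid X | FreeMonoid.toList w ∈ L} = e ⁻¹' F := by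
  constructor
  · rintro ⟨σ, _, dfa, rfl⟩
    haveI : Finite ((Function.End σ)ᵐᵒᵖ) := Finite.of_equiv (σ → σ) MulOpposite.opEquiv
    refine ⟨(Function.End σ)ᵐᵒᵖ, inferInstance, this,
      FreeMonoid.lift (fun a => (MulOpposite.op ((fun t => dfa.step t a) : Function.End σ) : (Function.End σ)ᵐᵒᵖ)),
      {m | m.unop dfa.start ∈ dfa.accept}, ?_⟩
    ext w
    simp only [Set.mem_setOf_eq, Set.mem_preimage, DFA.mem_accepts, DFA.eval]
    rw [unop_lift_eq]
  · rintro ⟨M, _, _, e, F, hF⟩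
    have : Fintype M := Fintype.ofFinite M
    refine ⟨M, this, ⟨fun m a => m * e (FreeMonoid.of a), 1, F⟩, ?_⟩
    ext l
    have h1 : DFA.evalFrom ⟨fun m a => m * e (FreeMonoid.of a), 1, F⟩ 1 l
        = 1 * e (FreeMonoid.ofList l) := evalFrom_eq_mul e l 1
    have h2 := Set.ext_iff.mp hF (FreeMonoid.ofList l)
    simp only [Set.mem_setOf_eq, Set.mem_preimage, FreeMonoid.toList_ofList] at h2
    simp only [DFA.mem_accepts, DFA.eval]
    rw [h1, one_mul]
    exact h2.symm
end

section
/- Let X be a type, L : Set (FreeMonoid X), and let N_L be the minimal automaton of L: states Q_L = { u⁻¹L | u : FreeMonoid X }, initial state L, transitions K ↦ a⁻¹K for a : X, accepting states { K ∈ Q_L | [] ∈ K } (quotients containing the empty word). Let M be any deterministic automaton with states Q, initial state s, transitions step, accepting set F, which accepts L and is reachable (every state is of the form evalFrom s w for some word w). Then there exists a unique function h : Q → Q_L such that h(s) = L, h(step q a) = a⁻¹(h q) for all q and a, and q ∈ F ↔ [] ∈ h q; moreover h is surjective. -/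
/-- universal property of the minimal automaton. Let `N_L` be the minimal
automaton of `L`: states the left quotients `u⁻¹L` of `L`, initial state `L`, transitions
`K ↦ a⁻¹K`, accepting states the quotients containing the empty word. For every
deterministic automaton `M` (states `Q`, initial state `M.start`, transitions `M.step`,
accepting set `M.accept`) which accepts `L` and is reachable, there is a unique map
`h : Q → Q_L` preserving the initial state, the transitions and acceptance; moreover
any such `h` is surjective. -/
theorem minimalAutomaton_universal {X : Type*} (L : Set (FreeMonoid X)) {Q : Type*}
    (M : DFA X Q)
    (haccepts : ∀ w : FreeMonoid X,
      M.evalFrom M.start (FreeMonoid.toList w) ∈ M.accept ↔ w ∈ L)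
    (hreach : ∀ q : Q, ∃ w : FreeMonoid X, q = M.evalFrom M.start (FreeMonoid.toList w)) :
    (∃! h : Q → {K : Set (FreeMonoid X) // ∃ u : FreeMonoid X, K = {w | u * w ∈ L}},
      (h M.start).val = L ∧
      (∀ (q : Q) (a : X),
        (h (M.step q a)).val = {w : FreeMonoid X | FreeMonoid.of a * w ∈ (h q).val}) ∧
      (∀ q : Q, q ∈ M.accept ↔ (1 : FreeMonoid X) ∈ (h q).val)) ∧
    ∀ h : Q → {K : Set (FreeMonoid X) // ∃ u : FreeMonoid X, K = {w | u * w ∈ L}},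
      ((h M.start).val = L ∧
       (∀ (q : Q) (a : X),
         (h (M.step q a)).val = {w : FreeMonoid X | FreeMonoid.of a * w ∈ (h q).val}) ∧
       (∀ q : Q, q ∈ M.accept ↔ (1 : FreeMonoid X) ∈ (h q).val)) →
      Function.Surjective h := by
  -- canonical map
  have hval : ∀ q : Q, ∃ u : FreeMonoid X,
      {w : FreeMonoid X | M.evalFrom q (FreeMonoid.toList w) ∈ M.accept} = {w | u * w ∈ L} := by
    intro q
    obtain ⟨u, hu⟩ := hreach q
    refine ⟨u, ?_⟩
    ext w
    simp only [Set.mem_setOf_eq, hu, ← haccepts (u * w), FreeMonoid.toList_mul,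
      DFA.evalFrom_of_append]
  set h₀ : Q → {K : Set (FreeMonoid X) // ∃ u : FreeMonoid X, K = {w | u * w ∈ L}} :=
    fun q => ⟨{w | M.evalFrom q (FreeMonoid.toList w) ∈ M.accept}, hval q⟩ with hh₀
  have h₀start : (h₀ M.start).val = L := by
    ext w; exact haccepts w
  have h₀step : ∀ (q : Q) (a : X),
      (h₀ (M.step q a)).val = {w : FreeMonoid X | FreeMonoid.of a * w ∈ (h₀ q).val} := by
    intro q a
    ext w
    simp only [hh₀, Set.mem_setOf_eq, FreeMonoid.toList_mul, FreeMonoid.toList_of,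
      DFA.evalFrom_of_append]
    rfl
  have h₀acc : ∀ q : Q, q ∈ M.accept ↔ (1 : FreeMonoid X) ∈ (h₀ q).val := by
    intro q
    simp [hh₀, DFA.evalFrom]
  -- key: any h satisfying the conditions is determined
  have key : ∀ h : Q → {K : Set (FreeMonoid X) // ∃ u : FreeMonoid X, K = {w | u * w ∈ L}}, ((h M.start).val = L ∧
       (∀ (q : Q) (a : X),
         (h (M.step q a)).val = {w : FreeMonoid X | FreeMonoid.of a * w ∈ (h q).val}) ∧
       (∀ q : Q, q ∈ M.accept ↔ (1 : FreeMonoid X) ∈ (h q).val)) →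
      ∀ (l : List X) (q : Q),
        (h (M.evalFrom q l)).val = {w | FreeMonoid.ofList l * w ∈ (h q).val} := by
    rintro h ⟨hs, hstep, hacc⟩ l
    induction l with
    | nil => intro q; simp [DFA.evalFrom]
    | cons a l ih =>
        intro q
        have : M.evalFrom q (a :: l) = M.evalFrom (M.step q a) l := rfl
        rw [this, ih, hstep]
        ext w
        simp only [Set.mem_setOf_eq]
        constructor <;> intro hw
        · have : FreeMonoid.ofList (a :: l) * w
              = FreeMonoid.of a * (FreeMonoid.ofList l * w) := by
            apply FreeMonoid.toList.injective; simp
          rw [this]; exact hw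
        · have : FreeMonoid.of a * (FreeMonoid.ofList l * w)
              = FreeMonoid.ofList (a :: l) * w := by
            apply FreeMonoid.toList.injective; simp
          rw [this]; exact hw
  have huniq : ∀ h : Q → {K : Set (FreeMonoid X) // ∃ u : FreeMonoid X, K = {w | u * w ∈ L}}, ((h M.start).val = L ∧
       (∀ (q : Q) (a : X),
         (h (M.step q a)).val = {w : FreeMonoid X | FreeMonoid.of a * w ∈ (h q).val}) ∧
       (∀ q : Q, q ∈ M.accept ↔ (1 : FreeMonoid X) ∈ (h q).val)) → h = h₀ := by
    intro h hh
    funext q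
    obtain ⟨u, hu⟩ := hreach q
    apply Subtype.ext
    rw [hu, key h hh, key h₀ ⟨h₀start, h₀step, h₀acc⟩, hh.1, h₀start]
  constructor
  · exact ⟨h₀, ⟨h₀start, h₀step, h₀acc⟩, huniq⟩
  · intro h hh
    rw [huniq h hh]
    rintro ⟨K, u, hK⟩
    refine ⟨M.evalFrom M.start (FreeMonoid.toList u), Subtype.ext ?_⟩
    have := key h₀ ⟨h₀start, h₀step, h₀acc⟩ (FreeMonoid.toList u) M.start
    show _ = K
    rw [this, h₀start, FreeMonoid.ofList_toList, hK]
end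

section
/- Let X be a type and L : Set (FreeMonoid X). Suppose M₁ and M₂ are deterministic automata over X (with state types Q₁, Q₂, initial states s₁, s₂, transitions step₁, step₂, accepting sets F₁, F₂) both accepting L, both reachable (every state is evalFrom sᵢ w for some word w) and both simple (the map sending a state q to the language { w | evalFrom q w is accepting } is injective). Then M₁ and M₂ are isomorphic: there is a bijection h : Q₁ → Q₂ with h(s₁) = s₂, h(step₁ q a) = step₂ (h q) a for all q and a, and q ∈ F₁ ↔ h q ∈ F₂. -/
/-- any two reachable and simple deterministic automata accepting the same
language `L` are isomorphic: there is a bijection between the state sets preserving the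
initial state, the transitions and acceptance. -/
theorem minimalAutomaton_unique {X Q₁ Q₂ : Type*} (L : Set (FreeMonoid X))
    (M₁ : DFA X Q₁) (M₂ : DFA X Q₂)
    (hacc₁ : ∀ w : FreeMonoid X,
      M₁.evalFrom M₁.start (FreeMonoid.toList w) ∈ M₁.accept ↔ w ∈ L)
    (hacc₂ : ∀ w : FreeMonoid X,
      M₂.evalFrom M₂.start (FreeMonoid.toList w) ∈ M₂.accept ↔ w ∈ L)
    (hreach₁ : ∀ q : Q₁, ∃ w : FreeMonoid X, q = M₁.evalFrom M₁.start (FreeMonoid.toList w))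
    (hreach₂ : ∀ q : Q₂, ∃ w : FreeMonoid X, q = M₂.evalFrom M₂.start (FreeMonoid.toList w))
    (hsimple₁ : Function.Injective fun q : Q₁ =>
      {w : FreeMonoid X | M₁.evalFrom q (FreeMonoid.toList w) ∈ M₁.accept})
    (hsimple₂ : Function.Injective fun q : Q₂ =>
      {w : FreeMonoid X | M₂.evalFrom q (FreeMonoid.toList w) ∈ M₂.accept}) :
    ∃ h : Q₁ ≃ Q₂,
      h M₁.start = M₂.start ∧
      (∀ (q : Q₁) (a : X), h (M₁.step q a) = M₂.step (h q) a) ∧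
      (∀ q : Q₁, q ∈ M₁.accept ↔ h q ∈ M₂.accept) := by
  set e₁ : FreeMonoid X → Q₁ := fun w => M₁.evalFrom M₁.start (FreeMonoid.toList w) with he₁
  set e₂ : FreeMonoid X → Q₂ := fun w => M₂.evalFrom M₂.start (FreeMonoid.toList w) with he₂
  have hres₁ : ∀ u w : FreeMonoid X,
      M₁.evalFrom (e₁ u) (FreeMonoid.toList w) ∈ M₁.accept ↔ u * w ∈ L := by
    intro u w
    rw [← hacc₁ (u * w)]
    have : FreeMonoid.toList (u * w) = FreeMonoid.toList u ++ FreeMonoid.toList w :=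
      FreeMonoid.toList_mul u w
    rw [this, DFA.evalFrom_of_append]
  have hres₂ : ∀ u w : FreeMonoid X,
      M₂.evalFrom (e₂ u) (FreeMonoid.toList w) ∈ M₂.accept ↔ u * w ∈ L := by
    intro u w
    rw [← hacc₂ (u * w)]
    have : FreeMonoid.toList (u * w) = FreeMonoid.toList u ++ FreeMonoid.toList w :=
      FreeMonoid.toList_mul u w
    rw [this, DFA.evalFrom_of_append]
  have key12 : ∀ u v : FreeMonoid X, e₁ u = e₁ v → e₂ u = e₂ v := by
    intro u v h
    apply hsimple₂
    ext w
    simp only [Set.mem_setOf_eq, hres₂]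
    rw [← hres₁ u w, ← hres₁ v w, h]
  have key21 : ∀ u v : FreeMonoid X, e₂ u = e₂ v → e₁ u = e₁ v := by
    intro u v h
    apply hsimple₁
    ext w
    simp only [Set.mem_setOf_eq, hres₁]
    rw [← hres₂ u w, ← hres₂ v w, h]
  classical
  let f : Q₁ → Q₂ := fun q => e₂ (Classical.choose (hreach₁ q))
  let g : Q₂ → Q₁ := fun q => e₁ (Classical.choose (hreach₂ q))
  have hf : ∀ w, f (e₁ w) = e₂ w := by
    intro w
    exact key12 _ _ (Classical.choose_spec (hreach₁ (e₁ w))).symm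
  have hg : ∀ w, g (e₂ w) = e₁ w := by
    intro w
    exact key21 _ _ (Classical.choose_spec (hreach₂ (e₂ w))).symm
  have hgf : ∀ q, g (f q) = q := by
    intro q
    obtain ⟨w, rfl⟩ := hreach₁ q
    rw [hf, hg]
  have hfg : ∀ q, f (g q) = q := by
    intro q
    obtain ⟨w, rfl⟩ := hreach₂ q
    rw [hg, hf]
  refine ⟨⟨f, g, hgf, hfg⟩, ?_, ?_, ?_⟩
  · have : M₁.start = e₁ (1 : FreeMonoid X) := rfl
    rw [this]
    exact hf 1
  · intro q a
    obtain ⟨w, rfl⟩ := hreach₁ q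
    have h1 : M₁.step (e₁ w) a = e₁ (w * FreeMonoid.of a) := by
      simp [he₁, FreeMonoid.toList_mul, DFA.evalFrom_of_append, DFA.evalFrom]
    have h2 : M₂.step (e₂ w) a = e₂ (w * FreeMonoid.of a) := by
      simp [he₂, FreeMonoid.toList_mul, DFA.evalFrom_of_append, DFA.evalFrom]
    simp only [Equiv.coe_fn_mk]
    rw [h1, hf, hf, h2]
  · intro q
    obtain ⟨w, rfl⟩ := hreach₁ q
    simp only [Equiv.coe_fn_mk]
    rw [hf]
    rw [show (e₁ w ∈ M₁.accept) ↔ w ∈ L from hacc₁ w,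
        show (e₂ w ∈ M₂.accept) ↔ w ∈ L from hacc₂ w]
end

section
/- Let K be a field (commutative semiring suffices), X a type, and L : MonoidAlgebra K (FreeMonoid X) →ₗ[K] K. The syntactic ideal I_L = { V | ∀ x y : FreeMonoid X, L (single x 1 * V * single y 1) = 0 } is the largest two-sided ideal of MonoidAlgebra K (FreeMonoid X) contained in the kernel of L: I_L ⊆ ker L, and every two-sided ideal J of MonoidAlgebra K (FreeMonoid X) with J ⊆ ker L satisfies J ⊆ I_L. -/
/-- the syntactic ideal
`I_L = {V | ∀ x y, L (single x 1 * V * single y 1) = 0}` of a `K`-weighted language `L`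
is the largest two-sided ideal contained in the kernel of `L`: it is contained in
`ker L = {V | L V = 0}`, and every two-sided ideal `J` contained in `ker L` is contained
in `I_L`. -/
theorem syntacticIdeal_largest (K : Type*) [Field K] (X : Type*)
    (L : MonoidAlgebra K (FreeMonoid X) →ₗ[K] K) :
    {V : MonoidAlgebra K (FreeMonoid X) | ∀ x y : FreeMonoid X,
        L (MonoidAlgebra.single x 1 * V * MonoidAlgebra.single y 1) = 0} ⊆
      {V : MonoidAlgebra K (FreeMonoid X) | L V = 0} ∧
    ∀ J : TwoSidedIdeal (MonoidAlgebra K (FreeMonoid X)),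
      (J : Set (MonoidAlgebra K (FreeMonoid X))) ⊆
          {V : MonoidAlgebra K (FreeMonoid X) | L V = 0} →
        (J : Set (MonoidAlgebra K (FreeMonoid X))) ⊆
          {V : MonoidAlgebra K (FreeMonoid X) | ∀ x y : FreeMonoid X,
            L (MonoidAlgebra.single x 1 * V * MonoidAlgebra.single y 1) = 0} := by
  constructor
  · intro V hV
    have h := hV 1 1
    rw [← MonoidAlgebra.one_def, one_mul, mul_one] at h
    exact h
  · intro J hJ V hV x y
    have : MonoidAlgebra.single x 1 * V * MonoidAlgebra.single y 1 ∈ J :=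
      J.mul_mem_right _ _ (J.mul_mem_left _ _ hV)
    exact hJ this
end

section
/- Let K be a field, X a type, L : MonoidAlgebra K (FreeMonoid X) →ₗ[K] K, and let π : MonoidAlgebra K (FreeMonoid X) → Syn L be the quotient K-algebra homomorphism by the syntactic ideal I_L of L. Then (i) L factors through π: there is a K-linear map f_L : Syn L →ₗ[K] K with L = f_L ∘ π; and (ii) for every K-algebra A, every surjective K-algebra homomorphism e : MonoidAlgebra K (FreeMonoid X) →ₐ[K] A and every K-linear map f : A →ₗ[K] K with L = f ∘ e, there exists a unique K-algebra homomorphism h : A →ₐ[K] Syn L with h ∘ e = π; moreover f_L ∘ h = f. -/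
/-- universal property of the syntactic `K`-algebra. Let
`π : MonoidAlgebra K (FreeMonoid X) →ₐ[K] S` be the quotient by the syntactic ideal
`I_L` of a `K`-weighted language `L` (i.e. `π` is a surjective `K`-algebra homomorphism
with `π V = 0 ↔ V ∈ I_L`). Then (i) `L` factors through `π` via a linear
`f_L : S →ₗ[K] K`, and (ii) for every `K`-algebra `A`, every surjective `K`-algebra
homomorphism `e` and every linear `f : A →ₗ[K] K` with `L = f ∘ e`, there is a unique
`K`-algebra homomorphism `h : A →ₐ[K] S` with `h ∘ e = π`; moreover `f_L ∘ h = f`. -/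
theorem syntacticAlgebra_universal (K : Type) [Field K] (X : Type)
    (L : MonoidAlgebra K (FreeMonoid X) →ₗ[K] K)
    (S : Type) [Ring S] [Algebra K S]
    (π : MonoidAlgebra K (FreeMonoid X) →ₐ[K] S)
    (hsurj : Function.Surjective π)
    (hker : ∀ V : MonoidAlgebra K (FreeMonoid X),
      π V = 0 ↔ ∀ x y : FreeMonoid X,
        L (MonoidAlgebra.single x 1 * V * MonoidAlgebra.single y 1) = 0) :
    ∃ fL : S →ₗ[K] K,
      (∀ V : MonoidAlgebra K (FreeMonoid X), L V = fL (π V)) ∧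
      ∀ (A : Type) [Ring A] [Algebra K A]
        (e : MonoidAlgebra K (FreeMonoid X) →ₐ[K] A),
        Function.Surjective e →
        ∀ f : A →ₗ[K] K, (∀ V : MonoidAlgebra K (FreeMonoid X), L V = f (e V)) →
          (∃! h : A →ₐ[K] S, ∀ V : MonoidAlgebra K (FreeMonoid X), h (e V) = π V) ∧
          ∀ h : A →ₐ[K] S,
            (∀ V : MonoidAlgebra K (FreeMonoid X), h (e V) = π V) →
            ∀ a : A, fL (h a) = f a := by
  -- key: L is constant on fibers of π
  have keyπ : ∀ V W : MonoidAlgebra K (FreeMonoid X), π V = π W → L V = L W := by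
    intro V W h
    have h0 : π (V - W) = 0 := by rw [map_sub, h, sub_self]
    have h1 := (hker _).mp h0 1 1
    have hone : (MonoidAlgebra.single (1 : FreeMonoid X) (1 : K)) =
        (1 : MonoidAlgebra K (FreeMonoid X)) := rfl
    rw [hone, one_mul, mul_one, map_sub] at h1
    exact sub_eq_zero.mp h1
  set g := Function.surjInv hsurj with hg
  have hgπ : ∀ a : S, π (g a) = a := fun a => Function.surjInv_eq hsurj a
  refine ⟨{ toFun := fun a => L (g a),
            map_add' := by
              intro a b
              have h2 : π (g (a + b)) = π (g a + g b) := by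
                rw [map_add, hgπ, hgπ, hgπ]
              show L (g (a + b)) = L (g a) + L (g b)
              rw [keyπ _ _ h2, map_add]
            map_smul' := by
              intro c a
              have h2 : π (g (c • a)) = π (c • g a) := by
                rw [map_smul, hgπ, hgπ]
              show L (g (c • a)) = c • L (g a)
              rw [keyπ _ _ h2, map_smul] }, ?_, ?_⟩
  · intro V
    exact keyπ V (g (π V)) (by rw [hgπ])
  · intro A _ _ e he f hf
    have keyA : ∀ V W : MonoidAlgebra K (FreeMonoid X), e V = e W → π V = π W := by
      intro V W h
      have h0 : e (V - W) = 0 := by rw [map_sub, h, sub_self]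
      have : π (V - W) = 0 := by
        rw [hker]
        intro x y
        have h1 : e (MonoidAlgebra.single x 1 * (V - W) * MonoidAlgebra.single y 1) = 0 := by
          rw [map_mul, map_mul, h0, mul_zero, zero_mul]
        rw [hf, h1, map_zero]
      rw [map_sub, sub_eq_zero] at this
      exact this
    set ge := Function.surjInv he with hge
    have hee : ∀ a : A, e (ge a) = a := fun a => Function.surjInv_eq he a
    refine ⟨⟨{ toFun := fun a => π (ge a),
               map_one' := by
                 show π (ge 1) = 1
                 rw [keyA (ge 1) 1 (by rw [hee, map_one]), map_one]
               map_mul' := by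
                 intro a b
                 show π (ge (a * b)) = π (ge a) * π (ge b)
                 rw [keyA (ge (a * b)) (ge a * ge b)
                   (by rw [hee, map_mul, hee, hee]), map_mul]
               map_zero' := by
                 show π (ge 0) = 0
                 rw [keyA (ge 0) 0 (by rw [hee, map_zero]), map_zero]
               map_add' := by
                 intro a b
                 show π (ge (a + b)) = π (ge a) + π (ge b)
                 rw [keyA (ge (a + b)) (ge a + ge b)
                   (by rw [hee, map_add, hee, hee]), map_add]
               commutes' := by
                 intro r
                 show π (ge (algebraMap K A r)) = algebraMap K S r
                 rw [keyA (ge (algebraMap K A r)) (algebraMap K _ r)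
                   (by rw [hee, AlgHom.commutes]), AlgHom.commutes] },
             ?_, ?_⟩, ?_⟩
    · intro V
      exact keyA (ge (e V)) V (hee (e V))
    · intro h' hh'
      ext a
      obtain ⟨V, rfl⟩ := he a
      rw [hh' V]
      exact (keyA (ge (e V)) V (hee (e V))).symm
    · intro h' hh' a
      obtain ⟨V, rfl⟩ := he a
      rw [hh' V]
      have := keyπ V (g (π V)) (by rw [hgπ])
      rw [hf] at this
      exact this.symm
end

section
/- Let K be a field, X a type, and L : MonoidAlgebra K (FreeMonoid X) →ₗ[K] K. Then the following are equivalent: (i) there exist a K-algebra A that is finite-dimensional as a K-vector space, a surjective K-algebra homomorphism e : MonoidAlgebra K (FreeMonoid X) →ₐ[K] A and a K-linear map f : A →ₗ[K] K with L = f ∘ e; (ii) the syntactic K-algebra Syn L = MonoidAlgebra K (FreeMonoid X) / I_L is finite-dimensional as a K-vector space. -/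
/-- a `K`-weighted language `L` is recognized by a finite-dimensional
`K`-algebra (via a surjective `K`-algebra homomorphism `e` and a linear functional `f`
with `L = f ∘ e`) iff its syntactic `K`-algebra — the quotient `S` of
`MonoidAlgebra K (FreeMonoid X)` by the syntactic ideal `I_L`, given here as a
surjective algebra homomorphism `π` with kernel `I_L` — is finite-dimensional over `K`. -/
theorem recognizable_iff_syntacticAlgebra_finiteDimensional (K : Type) [Field K] (X : Type)
    (L : MonoidAlgebra K (FreeMonoid X) →ₗ[K] K)
    (S : Type) [Ring S] [Algebra K S]
    (π : MonoidAlgebra K (FreeMonoid X) →ₐ[K] S)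
    (hsurj : Function.Surjective π)
    (hker : ∀ V : MonoidAlgebra K (FreeMonoid X),
      π V = 0 ↔ ∀ x y : FreeMonoid X,
        L (MonoidAlgebra.single x 1 * V * MonoidAlgebra.single y 1) = 0) :
    (∃ (A : Type) (_ : Ring A) (_ : Algebra K A)
        (e : MonoidAlgebra K (FreeMonoid X) →ₐ[K] A) (f : A →ₗ[K] K),
        FiniteDimensional K A ∧ Function.Surjective e ∧
          ∀ V : MonoidAlgebra K (FreeMonoid X), L V = f (e V)) ↔
      FiniteDimensional K S := by
  constructor
  · rintro ⟨A, _, _, e, f, hFD, hesurj, hL⟩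
    have hle : LinearMap.ker e.toLinearMap ≤ LinearMap.ker π.toLinearMap := by
      intro V hV
      simp only [LinearMap.mem_ker, AlgHom.toLinearMap_apply] at *
      rw [hker]
      intro x y
      rw [hL]
      have h0 : e (MonoidAlgebra.single x 1 * V * MonoidAlgebra.single y 1) = 0 := by
        rw [map_mul, map_mul, hV, mul_zero, zero_mul]
      rw [h0, map_zero]
    let q1 := e.toLinearMap.quotKerEquivOfSurjective hesurj
    let p := (LinearMap.ker e.toLinearMap).liftQ π.toLinearMap hle
    have hpsurj : Function.Surjective (p ∘ₗ q1.symm.toLinearMap) := by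
      intro s
      obtain ⟨V, hV⟩ := hsurj s
      refine ⟨e V, ?_⟩
      have : q1.symm (e V) = Submodule.Quotient.mk V := by
        rw [LinearEquiv.symm_apply_eq]
        rfl
      simp only [LinearMap.comp_apply, LinearEquiv.coe_toLinearMap, this]
      simpa [p] using hV
    exact Module.Finite.of_surjective (p ∘ₗ q1.symm.toLinearMap) hpsurj
  · intro h
    have hle : LinearMap.ker π.toLinearMap ≤ LinearMap.ker L := by
      intro V hV
      simp only [LinearMap.mem_ker, AlgHom.toLinearMap_apply] at *
      have := (hker V).mp hV (1 : FreeMonoid X) 1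
      rwa [← MonoidAlgebra.one_def, one_mul, mul_one] at this
    let q1 := π.toLinearMap.quotKerEquivOfSurjective hsurj
    let f := ((LinearMap.ker π.toLinearMap).liftQ L hle) ∘ₗ q1.symm.toLinearMap
    refine ⟨S, inferInstance, inferInstance, π, f, h, hsurj, fun V => ?_⟩
    have : q1.symm (π V) = Submodule.Quotient.mk V := by
      rw [LinearEquiv.symm_apply_eq]
      rfl
    simp only [f, LinearMap.comp_apply, LinearEquiv.coe_toLinearMap, this]
    rfl
end

section
/- Let C be a symmetric monoidal closed category with all coequalizers and countable coproducts. Then the forgetful functor from the category Mon_ C of monoid objects in C to C preserves reflexive coequalizers: whenever f, g : M ⟶ N is a reflexive pair of morphisms in Mon_ C (i.e., f and g admit a common section) and c : N ⟶ Q is a coequalizer of f and g in Mon_ C, the image of c under the forgetful functor is a coequalizer of the images of f and g in C. -/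
open CategoryTheory CategoryTheory.Limits MonoidalCategory

set_option linter.unusedSectionVars false

section Aux

variable {C : Type*} [Category C] [MonoidalCategory C] [SymmetricCategory C] [MonoidalClosed C]

noncomputable instance tensorRightPreservesColimits (X : C) :
    PreservesColimits (tensorRight X) :=
  preservesColimits_of_natIso
    (NatIso.ofComponents (fun Y => β_ X Y) (by intros; simp) : tensorLeft X ≅ tensorRight X)

theorem epi_of_cofork_isColimit {A B Q : C} {f g : A ⟶ B} {p : B ⟶ Q} {w : f ≫ p = g ≫ p}
    (h : IsColimit (Cofork.ofπ p w)) : Epi p :=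
  ⟨fun u v e => Cofork.IsColimit.hom_ext h (by simpa using e)⟩

theorem epi_whiskerRight_of_epi {Y Z : C} (h : Y ⟶ Z) [Epi h] (X : C) : Epi (h ▷ X) := by
  have := preserves_epi_of_preservesColimit (tensorRight X) h
  simpa using this

theorem epi_whiskerLeft_of_epi (X : C) {Y Z : C} (h : Y ⟶ Z) [Epi h] : Epi (X ◁ h) := by
  have := preserves_epi_of_preservesColimit (tensorLeft X) h
  simpa using this

variable {A B Q : C} (f g : A ⟶ B) (s : B ⟶ A)
  (hf : s ≫ f = 𝟙 B) (hg : s ≫ g = 𝟙 B)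
  (p : B ⟶ Q) (w : f ≫ p = g ≫ p) (hp : IsColimit (Cofork.ofπ p w))

/-- tensoring on the right with X preserves the coequalizer -/
noncomputable def whiskerRightCoforkIsColimit (X : C) :
    IsColimit (Cofork.ofπ (p ▷ X)
      (by rw [← comp_whiskerRight, ← comp_whiskerRight, w]) : Cofork (f ▷ X) (g ▷ X)) := by
  have := isColimitCoforkMapOfIsColimit (tensorRight X) w hp
  exact (IsColimit.equivIsoColimit (Cofork.ext (Iso.refl _) (by simp))) this

/-- tensoring on the left with X preserves the coequalizer -/
noncomputable def whiskerLeftCoforkIsColimit (X : C) :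
    IsColimit (Cofork.ofπ (X ◁ p)
      (by rw [← MonoidalCategory.whiskerLeft_comp, ← MonoidalCategory.whiskerLeft_comp, w]) :
      Cofork (X ◁ f) (X ◁ g)) := by
  have := isColimitCoforkMapOfIsColimit (tensorLeft X) w hp
  exact (IsColimit.equivIsoColimit (Cofork.ext (Iso.refl _) (by simp))) this

theorem tensor_key (u : A ⟶ B) (hu : s ≫ u = 𝟙 B) :
    u ▷ B = (A ◁ s) ≫ (u ⊗ₘ u) := by
  rw [← id_tensorHom, tensorHom_comp_tensorHom, Category.id_comp, hu, tensorHom_id]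

theorem tensor_key' (u : A ⟶ B) (hu : s ≫ u = 𝟙 B) :
    B ◁ u = (s ▷ A) ≫ (u ⊗ₘ u) := by
  rw [← tensorHom_id, tensorHom_comp_tensorHom, Category.id_comp, hu, id_tensorHom]

/-- For a reflexive pair, the tensor square of a coequalizer is a coequalizer of the
tensor squares. -/
noncomputable def tensorCoforkIsColimit :
    IsColimit (Cofork.ofπ (p ⊗ₘ p)
      (by rw [tensorHom_comp_tensorHom, tensorHom_comp_tensorHom, w]) : Cofork (f ⊗ₘ f) (g ⊗ₘ g)) := by
  have hR := whiskerRightCoforkIsColimit f g p w hp B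
  have hL := whiskerLeftCoforkIsColimit f g p w hp Q
  have hRA := whiskerRightCoforkIsColimit f g p w hp A
  have epiRA : Epi (p ▷ A) := epi_of_cofork_isColimit hRA
  apply Cofork.IsColimit.ofExistsUnique
  intro t
  have cond : (f ⊗ₘ f) ≫ t.π = (g ⊗ₘ g) ≫ t.π := t.condition
  have step1 : (f ▷ B) ≫ t.π = (g ▷ B) ≫ t.π := by
    rw [tensor_key s f hf, tensor_key s g hg, Category.assoc, Category.assoc, cond]
  set d1 : Q ⊗ B ⟶ t.pt := Cofork.IsColimit.desc hR t.π (by simpa using step1) with hd1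
  have fact1 : (p ▷ B) ≫ d1 = t.π := by simpa using Cofork.IsColimit.π_desc' hR t.π _
  have step2 : (Q ◁ f) ≫ d1 = (Q ◁ g) ≫ d1 := by
    rw [← cancel_epi (p ▷ A)]
    rw [← whisker_exchange_assoc, ← whisker_exchange_assoc, fact1,
      tensor_key' s f hf, tensor_key' s g hg, Category.assoc, Category.assoc, cond]
  set d2 : Q ⊗ Q ⟶ t.pt := Cofork.IsColimit.desc hL d1 (by simpa using step2) with hd2
  have fact2 : (Q ◁ p) ≫ d2 = d1 := by simpa using Cofork.IsColimit.π_desc' hL d1 _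
  refine ⟨d2, ?_, ?_⟩
  · simp only [Cofork.π_ofπ]
    have e : (p ⊗ₘ p) ≫ d2 = (p ▷ B) ≫ (Q ◁ p) ≫ d2 := by
      simp [MonoidalCategory.tensorHom_def]
    rw [e, fact2, fact1]
  · intro m hm
    simp only [Cofork.π_ofπ] at hm
    have hm' : (p ▷ B) ≫ (Q ◁ p) ≫ m = t.π := by
      rw [← hm]; simp [MonoidalCategory.tensorHom_def]
    apply Cofork.IsColimit.hom_ext hL
    apply Cofork.IsColimit.hom_ext hR
    simp only [Cofork.π_ofπ]
    rw [hm', fact2, fact1]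

end Aux

section Main

variable {C : Type*} [Category C] [MonoidalCategory C] [SymmetricCategory C] [MonoidalClosed C]

variable {M N : Mon C} (f g : M ⟶ N) (s : N ⟶ M)
  (hf : s ≫ f = 𝟙 N) (hg : s ≫ g = 𝟙 N)
  {Q : C} (p : N.X ⟶ Q) (w : f.hom ≫ p = g.hom ≫ p)
  (hp : IsColimit (Cofork.ofπ p w))

include hf in
theorem hom_section_f : s.hom ≫ f.hom = 𝟙 N.X := by
  have := congrArg Mon.Hom.hom hf
  simpa using this

include hg in
theorem hom_section_g : s.hom ≫ g.hom = 𝟙 N.X := by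
  have := congrArg Mon.Hom.hom hg
  simpa using this

/-- The tensor square cofork is colimiting. -/
noncomputable def hpp : IsColimit (Cofork.ofπ (p ⊗ₘ p)
    (by rw [tensorHom_comp_tensorHom, tensorHom_comp_tensorHom, w]) : Cofork (f.hom ⊗ₘ f.hom) (g.hom ⊗ₘ g.hom)) :=
  tensorCoforkIsColimit f.hom g.hom s.hom (hom_section_f f s hf) (hom_section_g g s hg) p w hp

include w in
theorem mulw : (f.hom ⊗ₘ f.hom) ≫ N.mon.mul ≫ p = (g.hom ⊗ₘ g.hom) ≫ N.mon.mul ≫ p := by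
  rw [← Category.assoc, ← IsMonHom.mul_hom f.hom, ← Category.assoc (g.hom ⊗ₘ g.hom), ← IsMonHom.mul_hom g.hom,
    Category.assoc, Category.assoc, w]

/-- Multiplication on the coequalizer. -/
noncomputable def qmul : Q ⊗ Q ⟶ Q :=
  Cofork.IsColimit.desc (hpp f g s hf hg p w hp) (N.mon.mul ≫ p) (mulw f g p w)

theorem qmul_fac : (p ⊗ₘ p) ≫ qmul f g s hf hg p w hp = N.mon.mul ≫ p := by
  simpa [qmul] using Cofork.IsColimit.π_desc' (hpp f g s hf hg p w hp) (N.mon.mul ≫ p) (mulw f g p w)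

/-- The coequalizer as a monoid object. -/
noncomputable def QmonObj : MonObj Q where
  one := N.mon.one ≫ p
  mul := qmul f g s hf hg p w hp
  one_mul := by
    have epiL1 : Epi ((𝟙_ C) ◁ p) :=
      epi_of_cofork_isColimit (whiskerLeftCoforkIsColimit f.hom g.hom p w hp (𝟙_ C))
    rw [← cancel_epi ((𝟙_ C) ◁ p), whisker_exchange_assoc, comp_whiskerRight, Category.assoc]
    slice_lhs 2 3 => rw [← MonoidalCategory.tensorHom_def]
    slice_lhs 2 3 => rw [qmul_fac]
    slice_lhs 1 2 => rw [MonObj.one_mul N.X]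
    rw [leftUnitor_naturality]
  mul_one := by
    have epiR1 : Epi (p ▷ (𝟙_ C)) :=
      epi_of_cofork_isColimit (whiskerRightCoforkIsColimit f.hom g.hom p w hp (𝟙_ C))
    rw [← cancel_epi (p ▷ (𝟙_ C)), ← whisker_exchange_assoc,
      MonoidalCategory.whiskerLeft_comp, Category.assoc]
    slice_lhs 2 3 => rw [← tensorHom_def']
    slice_lhs 2 3 => rw [qmul_fac]
    slice_lhs 1 2 => rw [MonObj.mul_one N.X]
    rw [rightUnitor_naturality]
  mul_assoc := by
    have epiP : Epi p := epi_of_cofork_isColimit hp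
    have epiPP : Epi (p ⊗ₘ p) := epi_of_cofork_isColimit (hpp f g s hf hg p w hp)
    have e1 : Epi ((p ⊗ₘ p) ▷ N.X) := epi_whiskerRight_of_epi (p ⊗ₘ p) N.X
    have e2 : Epi ((Q ⊗ Q) ◁ p) := epi_whiskerLeft_of_epi (Q ⊗ Q) p
    have e3 : Epi ((p ⊗ₘ p) ⊗ₘ p) := by
      rw [MonoidalCategory.tensorHom_def]
      exact epi_comp _ _
    rw [← cancel_epi ((p ⊗ₘ p) ⊗ₘ p)]
    -- LHS
    have lhs : ((p ⊗ₘ p) ⊗ₘ p) ≫ (qmul f g s hf hg p w hp ▷ Q) ≫ qmul f g s hf hg p w hp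
        = (N.mon.mul ▷ N.X) ≫ N.mon.mul ≫ p := by
      rw [MonoidalCategory.tensorHom_def (p ⊗ₘ p) p, Category.assoc, whisker_exchange_assoc,
        ← comp_whiskerRight_assoc, qmul_fac, comp_whiskerRight, Category.assoc]
      slice_lhs 2 3 => rw [← MonoidalCategory.tensorHom_def]
      slice_lhs 2 3 => rw [qmul_fac]
    have rhs : ((p ⊗ₘ p) ⊗ₘ p) ≫ (α_ Q Q Q).hom ≫ (Q ◁ qmul f g s hf hg p w hp)
          ≫ qmul f g s hf hg p w hp
        = (α_ N.X N.X N.X).hom ≫ (N.X ◁ N.mon.mul) ≫ N.mon.mul ≫ p := by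
      rw [associator_naturality_assoc, tensorHom_def' p (p ⊗ₘ p), Category.assoc,
        ← whisker_exchange_assoc, ← MonoidalCategory.whiskerLeft_comp_assoc, qmul_fac,
        MonoidalCategory.whiskerLeft_comp, Category.assoc]
      slice_lhs 3 4 => rw [← tensorHom_def']
      slice_lhs 3 4 => rw [qmul_fac]
      try simp only [Category.assoc]
    rw [lhs, rhs, MonObj.mul_assoc_assoc N.X]

noncomputable abbrev Qmon : Mon C := @Mon.mk C _ _ Q (QmonObj f g s hf hg p w hp)

end Main

section Main2

variable {C : Type*} [Category C] [MonoidalCategory C] [SymmetricCategory C] [MonoidalClosed C]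

variable {M N : Mon C} (f g : M ⟶ N) (s : N ⟶ M)
  (hf : s ≫ f = 𝟙 N) (hg : s ≫ g = 𝟙 N)
  {Q : C} (p : N.X ⟶ Q) (w : f.hom ≫ p = g.hom ≫ p)
  (hp : IsColimit (Cofork.ofπ p w))

/-- `p` as a monoid morphism. -/
@[simps]
noncomputable def pmon : N ⟶ Qmon f g s hf hg p w hp where
  hom := p
  isMonHom_hom := letI := QmonObj f g s hf hg p w hp; ⟨rfl, (qmul_fac f g s hf hg p w hp).symm⟩

include w in
theorem wmon : f ≫ pmon f g s hf hg p w hp = g ≫ pmon f g s hf hg p w hp := by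
  ext
  simpa using w

/-- The cofork on `f, g` in `Mon C` given by `p`. -/
noncomputable def monCofork : Cofork f g :=
  Cofork.ofπ (pmon f g s hf hg p w hp) (wmon f g s hf hg p w hp)

/-- The cofork `monCofork` is a colimit in `Mon C`. -/
noncomputable def monCoforkIsColimit : IsColimit (monCofork f g s hf hg p w hp) := by
  apply Cofork.IsColimit.ofExistsUnique
  intro t
  have cond : f.hom ≫ t.π.hom = g.hom ≫ t.π.hom := by
    have := congrArg Mon.Hom.hom t.condition
    simpa using this
  set u : Q ⟶ t.pt.X := Cofork.IsColimit.desc hp t.π.hom cond with hu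
  have ufac : p ≫ u = t.π.hom := by simpa using Cofork.IsColimit.π_desc' hp _ _
  have epiPP : Epi (p ⊗ₘ p) := epi_of_cofork_isColimit (hpp f g s hf hg p w hp)
  have epiP : Epi p := epi_of_cofork_isColimit hp
  refine ⟨Mon.Hom.mk' u ?_ ?_, ?_, ?_⟩
  · show (N.mon.one ≫ p) ≫ u = t.pt.mon.one
    rw [Category.assoc, ufac]
    exact IsMonHom.one_hom t.π.hom
  · show qmul f g s hf hg p w hp ≫ u = (u ⊗ₘ u) ≫ t.pt.mon.mul
    have tmul : N.mon.mul ≫ t.π.hom = (t.π.hom ⊗ₘ t.π.hom) ≫ t.pt.mon.mul := IsMonHom.mul_hom t.π.hom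
    rw [← cancel_epi (p ⊗ₘ p), ← Category.assoc, qmul_fac, Category.assoc, ufac,
      tmul, tensorHom_comp_tensorHom_assoc, ufac]
  · ext
    simpa [monCofork] using ufac
  · intro m hm
    ext
    apply (cancel_epi p).1
    have := congrArg Mon.Hom.hom hm
    exact this.trans ufac.symm

end Main2

/-- for a symmetric monoidal closed category `C` with all coequalizers and
countable coproducts, the forgetful functor `Mon C ⥤ C` preserves reflexive
coequalizers: if `f, g : M ⟶ N` in `Mon C` admit a common section `s` and
`c` is a colimiting cofork (coequalizer) of `f` and `g` in `Mon C`, then the image of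
`c` under the forgetful functor is a colimiting cofork in `C`. -/
theorem monForget_preserves_reflexive_coequalizers
    (C : Type*) [Category C] [MonoidalCategory C] [SymmetricCategory C]
    [MonoidalClosed C] [HasCoequalizers C] [HasCountableCoproducts C]
    {M N : Mon C} (f g : M ⟶ N) (s : N ⟶ M)
    (hf : s ≫ f = 𝟙 N) (hg : s ≫ g = 𝟙 N)
    (c : Cofork f g) (hc : IsColimit c) :
    Nonempty (IsColimit ((Mon.forget C).mapCocone c)) := by
  have w : f.hom ≫ coequalizer.π f.hom g.hom = g.hom ≫ coequalizer.π f.hom g.hom :=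
    coequalizer.condition f.hom g.hom
  have hp : IsColimit (Cofork.ofπ (coequalizer.π f.hom g.hom) w) :=
    coequalizerIsCoequalizer f.hom g.hom
  have hcQ := monCoforkIsColimit f g s hf hg _ w hp
  have h1 : IsColimit ((Mon.forget C).mapCocone (monCofork f g s hf hg _ w hp)) := by
    exact (isColimitMapCoconeCoforkEquiv (Mon.forget C) (wmon f g s hf hg _ w hp)).symm hp
  exact ⟨IsColimit.ofIsoColimit h1
    ((Cocones.functoriality _ (Mon.forget C)).mapIso (IsColimit.uniqueUpToIso hcQ hc))⟩
end
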